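/- Every virtually solvable group G satisfies a nontrivial group identity in two letters: there exists an element w ≠ 1 of the free group F_2 on two generators such that f(w) = 1 for every group homomorphism f : F_2 → G. -/

import Mathlib

open Matrix ModularGroup

-- x^n and y^n do not commute in the free group, for n ≠ 0
lemma pow_gen_not_commute {n : ℕ} (hn : n ≠ 0) :
    (FreeGroup.of (0 : Fin 2)) ^ n * FreeGroup.of 1 ^ n ≠
      FreeGroup.of 1 ^ n * FreeGroup.of (0 : Fin 2) ^ n := by
  intro h
  set U : Matrix.SpecialLinearGroup (Fin 2) ℤ := S * T * S⁻¹ with hU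
  have hf := congrArg (FreeGroup.lift (![T, U] : Fin 2 → Matrix.SpecialLinearGroup (Fin 2) ℤ)) h
  simp only [_root_.map_mul, _root_.map_pow, FreeGroup.lift_apply_of] at hf
  have hf' : T ^ n * U ^ n = U ^ n * T ^ n := by simpa using hf
  have hUn : U ^ n = S * T ^ n * S⁻¹ := by
    rw [hU, show S * T * S⁻¹ = (MulAut.conj S) T from rfl, ← map_pow]
    rfl
  have hT : ((T ^ n : Matrix.SpecialLinearGroup (Fin 2) ℤ) : Matrix (Fin 2) (Fin 2) ℤ)
      = !![1, (n : ℤ); 0, 1] := by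
    rw [← zpow_natCast, coe_T_zpow]
  have hSinv : ((S⁻¹ : Matrix.SpecialLinearGroup (Fin 2) ℤ) : Matrix (Fin 2) (Fin 2) ℤ)
      = !![0, 1; -1, 0] := by
    simp [SpecialLinearGroup.coe_inv, coe_S, adjugate_fin_two]
  have hUmat : ((U ^ n : Matrix.SpecialLinearGroup (Fin 2) ℤ) : Matrix (Fin 2) (Fin 2) ℤ)
      = !![1, 0; -(n : ℤ), 1] := by
    rw [hUn]
    push_cast [Matrix.SpecialLinearGroup.coe_mul]
    rw [hT, coe_S, hSinv]
    simp [Matrix.mul_fin_two]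
  have hmat := congrArg (fun m : Matrix.SpecialLinearGroup (Fin 2) ℤ =>
    (m : Matrix (Fin 2) (Fin 2) ℤ) 0 0) hf'
  simp only [Matrix.SpecialLinearGroup.coe_mul, hT, hUmat, Matrix.mul_fin_two] at hmat
  norm_num at hmat
  have h0 : (n : ℤ) = 0 := by nlinarith [hmat]
  exact hn (by exact_mod_cast h0)

lemma freeGroup_two_not_solvable : ¬ Group.IsSolvable (FreeGroup (Fin 2)) := by
  intro h
  set σ : Equiv.Perm (Fin 5) := finRotate 5 with hσ
  set τ : Equiv.Perm (Fin 5) := Equiv.swap 0 (σ 0) with hτ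
  have hsurj : Function.Surjective (FreeGroup.lift (![σ, τ] : Fin 2 → Equiv.Perm (Fin 5))) := by
    rw [← MonoidHom.range_eq_top, FreeGroup.range_lift_eq_closure, Matrix.range_cons_cons_empty]
    exact Equiv.Perm.closure_cycle_adjacent_swap isCycle_finRotate support_finRotate 0
  exact Equiv.Perm.fin_5_not_solvable (solvable_of_surjective hsurj)

lemma comm_of_free_solvable {H : Type*} [Group H] [IsFreeGroup H] [Group.IsSolvable H]
    (a b : H) : a * b = b * a := by
  obtain ⟨ι, ⟨bas⟩⟩ := IsFreeGroup.nonempty_basis (G := H)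
  -- transfer to the free group
  have hsolv : Group.IsSolvable (FreeGroup ι) :=
    solvable_of_surjective (f := bas.repr.toMonoidHom) bas.repr.surjective
  suffices hcomm : ∀ x y : FreeGroup ι, x * y = y * x by
    have := hcomm (bas.repr a) (bas.repr b)
    rw [← _root_.map_mul, ← _root_.map_mul] at this
    exact bas.repr.injective this
  intro x y
  by_cases hsing : ∀ i j : ι, i = j
  · -- subsingleton case: FreeGroup ι is cyclic
    rcases isEmpty_or_nonempty ι with hι | ⟨⟨i₀⟩⟩
    · have hall : ∀ z : FreeGroup ι, z = 1 := by
        intro z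
        have h1 : z ∈ Subgroup.closure (Set.range (FreeGroup.of : ι → FreeGroup ι)) := by
          rw [FreeGroup.closure_range_of]; trivial
        rw [Set.range_eq_empty, Subgroup.closure_empty, Subgroup.mem_bot] at h1
        exact h1
      rw [hall x, hall y]
    · -- everything is a power of `of i₀`
      have hinj : Function.Injective
          (FreeGroup.lift (fun _ : ι => Multiplicative.ofAdd (1 : ℤ))) := by
        have hli : (zpowersHom (FreeGroup ι) (FreeGroup.of i₀)).comp
            (FreeGroup.lift (fun _ : ι => Multiplicative.ofAdd (1 : ℤ)))
            = MonoidHom.id (FreeGroup ι) := by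
          ext i
          simp [hsing i i₀]
        intro u v huv
        have := congrArg (zpowersHom (FreeGroup ι) (FreeGroup.of i₀)) huv
        calc u = ((zpowersHom (FreeGroup ι) (FreeGroup.of i₀)).comp
            (FreeGroup.lift (fun _ : ι => Multiplicative.ofAdd (1 : ℤ)))) u := by rw [hli]; rfl
          _ = ((zpowersHom (FreeGroup ι) (FreeGroup.of i₀)).comp
            (FreeGroup.lift (fun _ : ι => Multiplicative.ofAdd (1 : ℤ)))) v := this
          _ = v := by rw [hli]; rfl
      apply hinj
      simp only [_root_.map_mul]
      exact mul_comm _ _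
  · classical
    push_neg at hsing
    obtain ⟨i, j, hij⟩ := hsing
    exfalso
    apply freeGroup_two_not_solvable
    -- embed F₂ into FreeGroup ι
    have hinj : Function.Injective
        (FreeGroup.lift (![FreeGroup.of i, FreeGroup.of j] : Fin 2 → FreeGroup ι)) := by
      have hli : (FreeGroup.lift (fun k : ι =>
            if k = i then FreeGroup.of (0 : Fin 2) else
              if k = j then FreeGroup.of (1 : Fin 2) else 1)).comp
          (FreeGroup.lift (![FreeGroup.of i, FreeGroup.of j] : Fin 2 → FreeGroup ι))
          = MonoidHom.id (FreeGroup (Fin 2)) := by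
        ext k
        fin_cases k <;> simp [hij, Ne.symm hij]
      intro u v huv
      have h2 := congrArg (FreeGroup.lift (fun k : ι =>
            if k = i then FreeGroup.of (0 : Fin 2) else
              if k = j then FreeGroup.of (1 : Fin 2) else 1)) huv
      calc u = _ := (DFunLike.congr_fun hli u).symm
        _ = _ := h2
        _ = v := DFunLike.congr_fun hli v
    exact solvable_of_solvable_injective hinj

/-- Every virtually solvable group satisfies a nontrivial group identity in two letters. -/
theorem virtually_solvable_satisfies_identity (G : Type*) [Group G]
    (hG : ∃ S : Subgroup G, IsSolvable S ∧ S.FiniteIndex) :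
    ∃ w : FreeGroup (Fin 2), w ≠ 1 ∧ ∀ f : FreeGroup (Fin 2) →* G, f w = 1 := by
  obtain ⟨S, hSsolv, hSfin⟩ := hG
  haveI : Group.IsSolvable S := hSsolv
  haveI := hSfin
  set N : Subgroup G := S.normalCore with hN
  haveI : Group.IsSolvable N :=
    solvable_of_solvable_injective (Subgroup.inclusion_injective S.normalCore_le)
  obtain ⟨d, hd⟩ := (inferInstance : Group.IsSolvable N).solvable
  have hn : N.index ≠ 0 := Subgroup.FiniteIndex.index_ne_zero
  set φ : FreeGroup (Fin 2) →* FreeGroup (Fin 2) :=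
    FreeGroup.lift (fun i : Fin 2 => FreeGroup.of i ^ N.index) with hφ
  have hex : ∃ v ∈ derivedSeries (FreeGroup (Fin 2)) d, φ v ≠ 1 := by
    by_contra hcon
    push_neg at hcon
    have hker : derivedSeries (FreeGroup (Fin 2)) d ≤ φ.ker := fun v hv =>
      MonoidHom.mem_ker.mpr (hcon v hv)
    haveI : Group.IsSolvable ↥φ.range := by
      refine ⟨⟨d, ?_⟩⟩
      rw [← map_derivedSeries_eq φ.rangeRestrict_surjective d, eq_bot_iff]
      rintro x ⟨g, hg, rfl⟩
      rw [Subgroup.mem_bot]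
      ext
      rw [MonoidHom.coe_rangeRestrict]
      exact hker hg
    have hcomm := comm_of_free_solvable
      (⟨φ (FreeGroup.of 0), MonoidHom.mem_range.mpr ⟨FreeGroup.of 0, rfl⟩⟩ : ↥φ.range)
      (⟨φ (FreeGroup.of 1), MonoidHom.mem_range.mpr ⟨FreeGroup.of 1, rfl⟩⟩ : ↥φ.range)
    have hcomm' : φ (FreeGroup.of 0) * φ (FreeGroup.of 1)
        = φ (FreeGroup.of 1) * φ (FreeGroup.of 0) := congrArg Subtype.val hcomm
    rw [hφ] at hcomm'
    simp only [FreeGroup.lift_apply_of] at hcomm'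
    exact pow_gen_not_commute hn hcomm'
  obtain ⟨v, hv, hv1⟩ := hex
  refine ⟨φ v, hv1, ?_⟩
  intro f
  set g : FreeGroup (Fin 2) →* G := f.comp φ with hg
  have hrange : ∀ x, g x ∈ N := by
    have hle : Subgroup.closure (Set.range (FreeGroup.of : Fin 2 → FreeGroup (Fin 2)))
        ≤ N.comap g := by
      rw [Subgroup.closure_le]
      rintro _ ⟨i, rfl⟩
      show g (FreeGroup.of i) ∈ N
      have : g (FreeGroup.of i) = f (FreeGroup.of i) ^ N.index := by
        rw [hg, MonoidHom.comp_apply, hφ, FreeGroup.lift_apply_of, map_pow]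
      rw [this]
      exact N.pow_index_mem (f (FreeGroup.of i))
    intro x
    have hx : x ∈ Subgroup.closure (Set.range (FreeGroup.of : Fin 2 → FreeGroup (Fin 2))) := by
      rw [FreeGroup.closure_range_of]; trivial
    exact hle hx
  set g' : FreeGroup (Fin 2) →* ↥N := g.codRestrict N hrange with hg'
  have hmem : g' v ∈ derivedSeries (↥N) d :=
    map_derivedSeries_le_derivedSeries g' d ⟨v, hv, rfl⟩
  rw [hd, Subgroup.mem_bot] at hmem
  show g v = 1
  have : g v = ((g' v : ↥N) : G) := rfl
  rw [this, hmem]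
  rfl
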